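/- For every ε > 0, the Aubin–Talenti function v_ε satisfies ∫_{ℝ³} ‖∇v_ε(x)‖² dx = 3^(3/2)·π²/4; in particular the integral is independent of ε. -/

import Mathlib

open Real MeasureTheory

section AuxStmt9

open Filter Set Metric Topology

private lemma stmt9_radial (ε : ℝ) (hε : 0 < ε) :
    ∫ y in Ioi (0:ℝ), y^4 * ((ε^2 + y^2)^3)⁻¹ = 3*π/(16*ε) := by
  set F : ℝ → ℝ := fun r => 3/(8*ε) * arctan (r/ε) - r/(2*(ε^2+r^2))
      + r*(ε^2-r^2)/(8*(ε^2+r^2)^2) with hF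
  have hne : ∀ r : ℝ, ε^2 + r^2 ≠ 0 := fun r => by positivity
  have hεne : ε ≠ 0 := hε.ne'
  have hderiv : ∀ r ∈ Ioi (0:ℝ), HasDerivAt F (r^4 * ((ε^2+r^2)^3)⁻¹) r := by
    intro r _
    have h1 : HasDerivAt (fun s : ℝ => 3/(8*ε) * arctan (s/ε))
        (3/(8*ε) * ((1+(r/ε)^2)⁻¹ * (1/ε))) r := by
      have := (Real.hasDerivAt_arctan (r/ε)).comp r ((hasDerivAt_id r).div_const ε)
      simpa [one_div] using this.const_mul (3/(8*ε))
    have h2 : HasDerivAt (fun s : ℝ => s/(2*(ε^2+s^2)))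
        ((1*(2*(ε^2+r^2)) - r*(2*(2*r^1)))/(2*(ε^2+r^2))^2) r := by
      have hden : HasDerivAt (fun s : ℝ => 2*(ε^2+s^2)) (2*(2*r^1)) r := by
        simpa using (((hasDerivAt_pow 2 r).const_add (ε^2)).const_mul 2)
      exact (hasDerivAt_id r).div hden (by positivity)
    have h3 : HasDerivAt (fun s : ℝ => s*(ε^2-s^2)/(8*(ε^2+s^2)^2))
        (((1*(ε^2-r^2) + r*(-(2*r^1)))*(8*(ε^2+r^2)^2)
          - r*(ε^2-r^2)*(8*(2*(ε^2+r^2)^1*(2*r^1))))/(8*(ε^2+r^2)^2)^2) r := by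
      have hnum : HasDerivAt (fun s : ℝ => s*(ε^2-s^2)) (1*(ε^2-r^2) + r*(-(2*r^1))) r := by
        exact (hasDerivAt_id r).mul (((hasDerivAt_pow 2 r).const_sub (ε^2)).congr_deriv (by ring))
      have hden : HasDerivAt (fun s : ℝ => 8*(ε^2+s^2)^2) (8*(2*(ε^2+r^2)^1*(2*r^1))) r := by
        simpa using ((((hasDerivAt_pow 2 r).const_add (ε^2)).pow 2).const_mul 8)
      exact hnum.div hden (by positivity)
    have := (h1.sub h2).add h3
    refine this.congr_deriv ?_
    have h := hne r
    field_simp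
    ring
  have hpos : ∀ r ∈ Ioi (0:ℝ), 0 ≤ r^4 * ((ε^2+r^2)^3)⁻¹ := fun r _ => by positivity
  have hT0 : Tendsto (fun r : ℝ => r/(ε^2+r^2)) atTop (𝓝 0) := by
    have h1 : Tendsto (fun r : ℝ => ε^2/r + r) atTop atTop :=
      (tendsto_const_nhds.div_atTop tendsto_id).add_atTop tendsto_id
    have h2 : Tendsto (fun r : ℝ => (ε^2/r + r)⁻¹) atTop (𝓝 0) := h1.inv_tendsto_atTop
    refine h2.congr' ?_
    filter_upwards [eventually_gt_atTop (0:ℝ)] with r hr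
    have h3 : ε^2/r + r = (ε^2+r^2)/r := by field_simp
    rw [h3, inv_div]
  have hT1 : Tendsto (fun r : ℝ => 3/(8*ε) * arctan (r/ε)) atTop (𝓝 (3/(8*ε) * (π/2))) := by
    have ha : Tendsto (fun r : ℝ => r/ε) atTop atTop :=
      tendsto_id.atTop_div_const hε
    exact ((Real.tendsto_arctan_atTop.mono_right nhdsWithin_le_nhds).comp ha).const_mul _
  have hT2 : Tendsto (fun r : ℝ => r/(2*(ε^2+r^2))) atTop (𝓝 0) := by
    have := hT0.const_mul (1/2)
    simp only [mul_zero] at this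
    refine this.congr fun r => ?_
    field_simp
  have hT3 : Tendsto (fun r : ℝ => r*(ε^2-r^2)/(8*(ε^2+r^2)^2)) atTop (𝓝 0) := by
    have hb := hT0.const_mul (1/8)
    simp only [mul_zero] at hb
    refine squeeze_zero_norm' ?_ hb
    filter_upwards [eventually_ge_atTop (0:ℝ)] with r hr
    rw [Real.norm_eq_abs, abs_div, abs_of_pos (by positivity : (0:ℝ) < 8*(ε^2+r^2)^2),
      abs_mul, abs_of_nonneg hr, div_le_iff₀ (by positivity)]
    have habs : |ε^2 - r^2| ≤ ε^2 + r^2 := by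
      rw [abs_le]; constructor <;> nlinarith [sq_nonneg r, sq_nonneg ε]
    have h1 : r * |ε^2 - r^2| ≤ r * (ε^2+r^2) := by
      exact mul_le_mul_of_nonneg_left habs hr
    calc r * |ε^2 - r^2| ≤ r * (ε^2+r^2) := h1
      _ = 1/8 * (r/(ε^2+r^2)) * (8*(ε^2+r^2)^2) := by field_simp
  have hTF : Tendsto F atTop (𝓝 (3/(8*ε) * (π/2) - 0 + 0)) := (hT1.sub hT2).add hT3
  have hcont : ContinuousWithinAt F (Ici 0) 0 := by
    have hc : Continuous F := by
      exact ((continuous_const.mul (Real.continuous_arctan.comp (continuous_id.div_const ε))).sub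
        (continuous_id.div (continuous_const.mul (continuous_const.add (continuous_pow 2)))
          fun r => by show 2*(ε^2+r^2) ≠ 0; positivity)).add
        ((continuous_id.mul (continuous_const.sub (continuous_pow 2))).div
          (continuous_const.mul ((continuous_const.add (continuous_pow 2)).pow 2))
          fun r => by positivity)
    exact hc.continuousWithinAt
  have key := integral_Ioi_of_hasDerivAt_of_nonneg hcont hderiv hpos hTF
  rw [key]
  have hF0 : F 0 = 0 := by simp [hF]
  rw [hF0]
  field_simp
  ring

private lemma stmt9_grad (ε : ℝ) (hε : 0 < ε) (v : EuclideanSpace ℝ (Fin 3) → ℝ)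
    (hv : ∀ x : EuclideanSpace ℝ (Fin 3),
      v x = 3 ^ ((1 : ℝ) / 4) * ε ^ ((1 : ℝ) / 2) * (ε ^ 2 + ‖x‖ ^ 2) ^ (-(1 : ℝ) / 2))
    (x : EuclideanSpace ℝ (Fin 3)) :
    ‖gradient v x‖^2
      = (3 ^ ((1:ℝ)/4) * ε ^ ((1:ℝ)/2))^2 * (‖x‖^2 * ((ε^2+‖x‖^2)^3)⁻¹) := by
  set c : ℝ := 3 ^ ((1:ℝ)/4) * ε ^ ((1:ℝ)/2) with hc
  have hcpos : 0 < c := by positivity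
  have hpos : (0:ℝ) < ε^2 + ‖x‖^2 := by positivity
  have hveq : v = fun y : EuclideanSpace ℝ (Fin 3) => c * ((ε^2+‖y‖^2) ^ (-(1:ℝ)/2)) :=
    funext fun y => hv y
  have h1 : HasFDerivAt (fun y : EuclideanSpace ℝ (Fin 3) => ε^2 + ‖y‖^2)
      (2 • innerSL ℝ x) x := by
    simpa using ((hasFDerivAt_id x).norm_sq).const_add (ε^2)
  have h2 : HasDerivAt (fun t : ℝ => t ^ (-(1:ℝ)/2))
      ((-(1:ℝ)/2) * (ε^2+‖x‖^2) ^ ((-(1:ℝ)/2) - 1)) (ε^2+‖x‖^2) :=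
    Real.hasDerivAt_rpow_const (Or.inl hpos.ne')
  have h4 := (h2.comp_hasFDerivAt x h1).const_mul c
  have h5 : HasGradientAt v ((-c * (ε^2+‖x‖^2) ^ (-(3:ℝ)/2)) • x) x := by
    rw [hveq, hasGradientAt_iff_hasFDerivAt]
    refine h4.congr_fderiv ?_
    ext y
    have he : (ε^2+‖x‖^2) ^ ((-(1:ℝ)/2) - 1) = (ε^2+‖x‖^2) ^ (-(3:ℝ)/2) := by norm_num
    simp [InnerProductSpace.toDual_apply_apply, real_inner_smul_left, he]
    ring
  rw [h5.gradient, norm_smul, mul_pow, Real.norm_eq_abs]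
  have habs : |(-c * (ε^2+‖x‖^2) ^ (-(3:ℝ)/2))| = c * (ε^2+‖x‖^2) ^ (-(3:ℝ)/2) := by
    rw [neg_mul, abs_neg, abs_of_nonneg (by positivity)]
  rw [habs, mul_pow]
  have hA : ((ε^2+‖x‖^2) ^ (-(3:ℝ)/2))^2 = ((ε^2+‖x‖^2)^3)⁻¹ := by
    rw [← Real.rpow_natCast ((ε^2+‖x‖^2) ^ (-(3:ℝ)/2)) 2, ← Real.rpow_mul hpos.le,
      ← Real.rpow_natCast (ε^2+‖x‖^2) 3, ← Real.rpow_neg hpos.le]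
    norm_num
  rw [hA]
  ring

private lemma stmt9_vol :
    (volume (ball (0:EuclideanSpace ℝ (Fin 3)) 1)).toReal = 4*π/3 := by
  rw [EuclideanSpace.volume_ball]
  simp only [Fintype.card_fin]
  rw [ENNReal.ofReal_one, one_pow, one_mul]
  have hg : Real.Gamma (((3:ℕ):ℝ)/2 + 1) = 3/4 * Real.sqrt π := by
    rw [show ((3:ℕ):ℝ)/2 + 1 = 3/2 + 1 by norm_num, Real.Gamma_add_one (by norm_num),
      show (3:ℝ)/2 = 1/2 + 1 by norm_num, Real.Gamma_add_one (by norm_num),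
      Real.Gamma_one_half_eq]
    ring
  have hs : Real.sqrt π ^ 3 = π * Real.sqrt π := by
    have h := Real.sq_sqrt Real.pi_pos.le
    nlinarith [Real.sqrt_nonneg π]
  have hsne : Real.sqrt π ≠ 0 := by positivity
  rw [hg, hs]
  rw [show π * Real.sqrt π / (3/4 * Real.sqrt π) = 4*π/3 by field_simp]
  exact ENNReal.toReal_ofReal (by positivity)

end AuxStmt9

/-- For every `ε > 0`, the Aubin–Talenti function
`v_ε(x) = 3^(1/4) ε^(1/2) (ε² + ‖x‖²)^(-1/2)` on `ℝ³` satisfies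
`∫ ‖∇v_ε‖² = 3^(3/2) π² / 4`. -/
theorem stmt_9 (ε : ℝ) (hε : 0 < ε)
    (v : EuclideanSpace ℝ (Fin 3) → ℝ)
    (hv : ∀ x : EuclideanSpace ℝ (Fin 3),
      v x = 3 ^ ((1 : ℝ) / 4) * ε ^ ((1 : ℝ) / 2) * (ε ^ 2 + ‖x‖ ^ 2) ^ (-(1 : ℝ) / 2)) :
    ∫ x : EuclideanSpace ℝ (Fin 3), ‖gradient v x‖ ^ 2
      = 3 ^ ((3 : ℝ) / 2) * π ^ 2 / 4 := by
  set c : ℝ := 3 ^ ((1:ℝ)/4) * ε ^ ((1:ℝ)/2) with hc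
  set g : ℝ → ℝ := fun r => c^2 * (r^2 * ((ε^2+r^2)^3)⁻¹) with hg
  have hfun : (fun x : EuclideanSpace ℝ (Fin 3) => ‖gradient v x‖ ^ 2)
      = fun x => g ‖x‖ := funext fun x => stmt9_grad ε hε v hv x
  rw [hfun, integral_fun_norm_addHaar volume g]
  simp only [finrank_euclideanSpace_fin, smul_eq_mul, nsmul_eq_mul, measureReal_def, stmt9_vol]
  have hinner : ∀ y : ℝ, y^2 * g y = c^2 * (y^4 * ((ε^2+y^2)^3)⁻¹) := fun y => by
    simp only [hg]; ring
  simp_rw [hinner]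
  rw [integral_const_mul, stmt9_radial ε hε]
  have hc2 : c^2 = 3 ^ ((1:ℝ)/2) * ε := by
    rw [hc, mul_pow, ← Real.rpow_natCast ((3:ℝ) ^ ((1:ℝ)/4)) 2,
      ← Real.rpow_mul (by norm_num : (0:ℝ) ≤ 3),
      ← Real.rpow_natCast (ε ^ ((1:ℝ)/2)) 2, ← Real.rpow_mul hε.le]
    norm_num
  have h32 : (3:ℝ) ^ ((3:ℝ)/2) = 3 * 3 ^ ((1:ℝ)/2) := by
    rw [show (3:ℝ)/2 = 1/2 + 1 by norm_num, Real.rpow_add (by norm_num), Real.rpow_one]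
    ring
  rw [hc2, h32]
  field_simp
  ring
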